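/- Let H be a finite connected graph with a weight function w assigning to each edge a positive integer, and let G be the unweighted simple graph obtained from H by replacing each edge e = {u,v} of H by a path of w(e) unit edges from u to v through w(e) − 1 new internal vertices (distinct internal vertices for distinct edges). Then for all vertices u, v of H, the shortest-path distance between u and v in G equals the minimum, over all walks from u to v in H, of the sum of the weights of the edges of the walk. -/
import Mathlib


/-- The weighted length of a walk in a graph with edge weights `w`. -/
def weightedLen {V : Type*} {H : SimpleGraph V} (w : V → V → ℕ) {u v : V}
    (p : H.Walk u v) : ℕ :=
  (p.darts.map (fun d => w d.toProd.1 d.toProd.2)).sum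

/-- Let `H` be a finite connected graph with positive integer edge weights `w`, and let `G`
be the unweighted graph obtained from `H` by replacing each edge `{u,v}` by a path of
`w u v` unit edges through `w u v - 1` new internal vertices (distinct internal vertices
for distinct edges).  The subdivision structure is recorded by an injection `ι : V → U` of
the original vertices and, for every edge `(u,v)` of `H`, a parametrized path
`P u v h : ℕ → U` from `ι u` to `ι v`.  Then for all original vertices `u, v`, the
shortest-path distance between `ι u` and `ι v` in `G` equals the minimum weighted length
of a walk from `u` to `v` in `H`. -/
theorem subdivision_distance_eq_weighted_distance
    {V U : Type*} [Fintype V] [Fintype U]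
    (H : SimpleGraph V) (hH : H.Connected)
    (w : V → V → ℕ)
    (hwsymm : ∀ u v : V, w u v = w v u)
    (hwpos : ∀ u v : V, H.Adj u v → 0 < w u v)
    (G : SimpleGraph U) (ι : V → U) (hι : Function.Injective ι)
    (P : ∀ u v : V, H.Adj u v → ℕ → U)
    -- the path from `u` to `v` starts at `ι u` and ends at `ι v`:
    (hP0 : ∀ u v : V, ∀ h : H.Adj u v, P u v h 0 = ι u)
    (hPw : ∀ u v : V, ∀ h : H.Adj u v, P u v h (w u v) = ι v)
    -- the path from `v` to `u` is the reversal of the path from `u` to `v`: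
    (hPrev : ∀ u v : V, ∀ h : H.Adj u v, ∀ t : ℕ, t ≤ w u v →
      P u v h t = P v u h.symm (w u v - t))
    -- each path visits pairwise distinct vertices:
    (hPinj : ∀ u v : V, ∀ h : H.Adj u v, ∀ t t' : ℕ, t ≤ w u v → t' ≤ w u v →
      P u v h t = P u v h t' → t = t')
    -- internal vertices of the paths are new vertices:
    (hPint : ∀ u v : V, ∀ h : H.Adj u v, ∀ t : ℕ, 0 < t → t < w u v →
      P u v h t ∉ Set.range ι)
    -- distinct edges of `H` get distinct internal vertices:
    (hPdisj : ∀ u v : V, ∀ h : H.Adj u v, ∀ u' v' : V, ∀ h' : H.Adj u' v',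
      ∀ t t' : ℕ, 0 < t → t < w u v → 0 < t' → t' < w u' v' →
      P u v h t = P u' v' h' t' → s(u, v) = s(u', v'))
    -- the edges of `G` are exactly the unit edges of the subdivision paths:
    (hAdj : ∀ x y : U, G.Adj x y ↔
      ∃ (u v : V) (h : H.Adj u v) (t : ℕ), t + 1 ≤ w u v ∧
        ((x = P u v h t ∧ y = P u v h (t + 1)) ∨ (y = P u v h t ∧ x = P u v h (t + 1))))
    -- every vertex of `G` is an original vertex or an internal vertex of some path:
    (hSurj : ∀ x : U, x ∈ Set.range ι ∨
      ∃ (u v : V) (h : H.Adj u v) (t : ℕ), 0 < t ∧ t < w u v ∧ x = P u v h t) :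
    ∀ u v : V,
      G.dist (ι u) (ι v) = sInf {L : ℕ | ∃ p : H.Walk u v, weightedLen w p = L} := by
  classical
  have hwl_cons : ∀ {a c b : V} (h : H.Adj a c) (p : H.Walk c b),
      weightedLen w (SimpleGraph.Walk.cons h p) = w a c + weightedLen w p := by
    intro a c b h p
    simp [weightedLen, SimpleGraph.Walk.darts_cons]
  have hwl_nil : ∀ {a : V}, weightedLen w (SimpleGraph.Walk.nil : H.Walk a a) = 0 := by
    intro a; simp [weightedLen]
  set dH : V → V → ℕ := fun a b => sInf {L | ∃ p : H.Walk a b, weightedLen w p = L}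
    with hdHdef
  have hdH_le : ∀ (a b : V) (p : H.Walk a b), dH a b ≤ weightedLen w p := by
    intro a b p; exact Nat.sInf_le ⟨p, rfl⟩
  have hdH_ex : ∀ a b : V, ∃ p : H.Walk a b, weightedLen w p = dH a b := by
    intro a b
    have hne : {L | ∃ p : H.Walk a b, weightedLen w p = L}.Nonempty := by
      obtain ⟨p⟩ := hH.preconnected a b
      exact ⟨weightedLen w p, p, rfl⟩
    exact Nat.sInf_mem hne
  have htri : ∀ a b c : V, H.Adj a b → dH a c ≤ w a b + dH b c := by
    intro a b c hab
    obtain ⟨p, hp⟩ := hdH_ex b c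
    calc dH a c ≤ weightedLen w (SimpleGraph.Walk.cons hab p) := hdH_le _ _ _
      _ = w a b + weightedLen w p := hwl_cons _ _
      _ = w a b + dH b c := by rw [hp]
  -- lifting walks of `H` to walks of `G`
  have hseg : ∀ (a b : V) (h : H.Adj a b) (k t : ℕ), t + k = w a b →
      ∃ q : G.Walk (P a b h t) (ι b), q.length = k := by
    intro a b h k
    induction k with
    | zero =>
      intro t ht
      have ht' : t = w a b := by omega
      refine ⟨SimpleGraph.Walk.nil.copy (by rw [ht', hPw]) rfl, ?_⟩
      simp
    | succ k ih =>
      intro t ht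
      have hadj : G.Adj (P a b h t) (P a b h (t + 1)) :=
        (hAdj _ _).2 ⟨a, b, h, t, by omega, Or.inl ⟨rfl, rfl⟩⟩
      obtain ⟨q, hq⟩ := ih (t + 1) (by omega)
      exact ⟨SimpleGraph.Walk.cons hadj q, by simp [hq]⟩
  have hlift : ∀ (a b : V) (p : H.Walk a b),
      ∃ q : G.Walk (ι a) (ι b), q.length = weightedLen w p := by
    intro a b p
    induction p with
    | nil => exact ⟨SimpleGraph.Walk.nil, by simp [weightedLen]⟩
    | @cons a c b h p ih =>
      obtain ⟨q1, hq1⟩ := hseg a c h (w a c) 0 (by omega)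
      obtain ⟨q2, hq2⟩ := ih
      refine ⟨(q1.copy (hP0 a c h) rfl).append q2, ?_⟩
      simp [SimpleGraph.Walk.length_append, hq1, hq2, hwl_cons]
  -- classification of representations
  have hrepV : ∀ (c a b : V) (h : H.Adj a b) (t : ℕ), t ≤ w a b → ι c = P a b h t →
      (t = 0 ∧ c = a) ∨ (t = w a b ∧ c = b) := by
    intro c a b h t ht hc
    rcases Nat.eq_zero_or_pos t with h0 | h0
    · subst h0; rw [hP0] at hc; exact Or.inl ⟨rfl, hι hc⟩
    · rcases eq_or_lt_of_le ht with hw | hw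
      · rw [hw, hPw] at hc; exact Or.inr ⟨hw, hι hc⟩
      · exact absurd ⟨c, hc⟩ (hPint a b h t h0 hw)
  have hrepInt : ∀ (a b : V) (h : H.Adj a b) (t : ℕ), 0 < t → t < w a b →
      ∀ (a' b' : V) (h' : H.Adj a' b') (t' : ℕ), t' ≤ w a' b' → P a b h t = P a' b' h' t' →
      (a = a' ∧ b = b' ∧ t' = t) ∨ (b = a' ∧ a = b' ∧ t' = w a b - t) := by
    intro a b h t ht0 htw a' b' h' t' ht' heq
    have hni : P a b h t ∉ Set.range ι := hPint a b h t ht0 htw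
    have ht'0 : 0 < t' := by
      rcases Nat.eq_zero_or_pos t' with h0 | h0
      · exfalso; apply hni; subst h0; rw [heq, hP0]; exact ⟨a', rfl⟩
      · exact h0
    have ht'w : t' < w a' b' := by
      rcases eq_or_lt_of_le ht' with h0 | h0
      · exfalso; apply hni; rw [heq, h0, hPw]; exact ⟨b', rfl⟩
      · exact h0
    have hs := hPdisj a b h a' b' h' t t' ht0 htw ht'0 ht'w heq
    rw [Sym2.eq_iff] at hs
    rcases hs with ⟨ha, hb⟩ | ⟨ha, hb⟩
    · subst ha; subst hb
      exact Or.inl ⟨rfl, rfl, (hPinj a b h t t' htw.le ht' heq).symm⟩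
    · subst ha; subst hb
      right
      refine ⟨rfl, rfl, ?_⟩
      have heq2 : P b a h.symm (w a b - t) = P b a h.symm t' :=
        (hPrev a b h t htw.le).symm.trans heq
      have hww : w a b = w b a := hwsymm a b
      exact (hPinj b a h.symm (w a b - t) t' (by omega) (by omega) heq2).symm
  intro u v
  have hgoal : sInf {L | ∃ p : H.Walk u v, weightedLen w p = L} = dH u v := rfl
  rw [hgoal]
  by_cases huv : u = v
  · subst huv
    have h0 : dH u u ≤ 0 := by
      have := hdH_le u u SimpleGraph.Walk.nil
      simpa [hwl_nil] using this
    rw [SimpleGraph.dist_self]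
    omega
  · -- u ≠ v : both `u` and `v` have neighbours in `H`
    have hnbru : ∃ b, H.Adj u b := by
      obtain ⟨p⟩ := hH.preconnected u v
      cases p with
      | nil => exact absurd rfl huv
      | cons h _ => exact ⟨_, h⟩
    have hnbrv : ∃ b, H.Adj v b := by
      obtain ⟨p⟩ := hH.preconnected v u
      cases p with
      | nil => exact absurd rfl (Ne.symm huv)
      | cons h _ => exact ⟨_, h⟩
    -- the potential function
    set f : U → ℕ := fun x => sInf {c | ∃ (a b : V) (h : H.Adj a b) (t : ℕ),
        t ≤ w a b ∧ x = P a b h t ∧ c = (w a b - t) + dH b v} with hfdef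
    have hf_le : ∀ (x : U) (a b : V) (h : H.Adj a b) (t : ℕ), t ≤ w a b → x = P a b h t →
        f x ≤ (w a b - t) + dH b v := by
      intro x a b h t ht hx
      exact Nat.sInf_le ⟨a, b, h, t, ht, hx, rfl⟩
    have hf_mem : ∀ (x : U) (a b : V) (h : H.Adj a b) (t : ℕ), t ≤ w a b → x = P a b h t →
        ∃ (a' b' : V) (h' : H.Adj a' b') (t' : ℕ), t' ≤ w a' b' ∧ x = P a' b' h' t' ∧
          f x = (w a' b' - t') + dH b' v := by
      intro x a b h t ht hx
      exact Nat.sInf_mem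
        (s := {c | ∃ (a b : V) (h : H.Adj a b) (t : ℕ),
          t ≤ w a b ∧ x = P a b h t ∧ c = (w a b - t) + dH b v})
        ⟨(w a b - t) + dH b v, a, b, h, t, ht, hx, rfl⟩
    -- f is 1-Lipschitz along edges of G
    have hLip : ∀ x y : U, G.Adj x y → f x ≤ f y + 1 := by
      intro x y hxy
      obtain ⟨a, b, h, t, ht, hc⟩ := (hAdj x y).1 hxy
      have hww : w a b = w b a := hwsymm a b
      rcases hc with ⟨hx, hy⟩ | ⟨hy, hx⟩
      · -- x = P a b h t, y = P a b h (t+1)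
        obtain ⟨a', b', h', t', ht', hy', hfy⟩ := hf_mem y a b h (t + 1) ht hy
        have h2 : f x ≤ (w a b - t) + dH b v := hf_le x a b h t (by omega) hx
        by_cases hw : t + 1 = w a b
        · -- y = ι b
          have hyb : ι b = P a' b' h' t' := by
            rw [← hy', hy, hw, hPw]
          rcases hrepV b a' b' h' t' ht' hyb with ⟨ht0', hba⟩ | ⟨htw', hbb⟩
          · subst hba
            have h1 := htri b b' v h'
            omega
          · subst hbb
            omega
        · -- y is internal on the path of (a,b)
          have hint := hrepInt a b h (t + 1) (by omega) (by omega) a' b' h' t' ht'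
            (by rw [← hy, hy'])
          rcases hint with ⟨ha', hb', ht''⟩ | ⟨ha', hb', ht''⟩
          · subst ha'; subst hb'
            omega
          · subst ha'; subst hb'
            have hx' : x = P b a h.symm (w a b - t) := by
              rw [hx, hPrev a b h t (by omega)]
            have h3 : f x ≤ (w b a - (w a b - t)) + dH a v :=
              hf_le x b a h.symm (w a b - t) (by omega) hx'
            omega
      · -- y = P a b h t, x = P a b h (t+1)
        obtain ⟨a', b', h', t', ht', hy', hfy⟩ := hf_mem y a b h t (by omega) hy
        have hx' : x = P b a h.symm (w a b - (t + 1)) := by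
          rw [hx, hPrev a b h (t + 1) ht]
        have h3 : f x ≤ (w b a - (w a b - (t + 1))) + dH a v :=
          hf_le x b a h.symm (w a b - (t + 1)) (by omega) hx'
        by_cases ht0 : t = 0
        · -- y = ι a
          have hya : ι a = P a' b' h' t' := by
            rw [← hy', hy, ht0, hP0]
          rcases hrepV a a' b' h' t' ht' hya with ⟨ht0', haa⟩ | ⟨htw', hab⟩
          · subst haa
            have h1 := htri a b' v h'
            omega
          · subst hab
            omega
        · -- y is internal on the path of (a,b)
          have hint := hrepInt a b h t (by omega) (by omega) a' b' h' t' ht'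
            (by rw [← hy, hy'])
          rcases hint with ⟨ha', hb', ht''⟩ | ⟨ha', hb', ht''⟩
          · subst ha'; subst hb'
            have h2 : f x ≤ (w a b - (t + 1)) + dH b v :=
              hf_le x a b h (t + 1) (by omega) hx
            omega
          · subst ha'; subst hb'
            omega
    -- f bounds walk lengths to ι v
    have hbound : ∀ (x y : U) (q : G.Walk x y), y = ι v → f x ≤ q.length := by
      intro x y q
      induction q with
      | nil =>
        intro hx
        subst hx
        obtain ⟨b, hb⟩ := hnbrv
        have h0 : f (ι v) ≤ (w b v - w b v) + dH v v :=
          hf_le _ b v hb.symm (w b v) le_rfl (hPw b v hb.symm).symm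
        have h1 : dH v v ≤ 0 := by
          have := hdH_le v v SimpleGraph.Walk.nil
          simpa [hwl_nil] using this
        simp only [SimpleGraph.Walk.length_nil]
        omega
      | cons hadj q ih =>
        intro hyv
        simp only [SimpleGraph.Walk.length_cons]
        have h1 := hLip _ _ hadj
        have h2 := ih hyv
        omega
    -- dH u v ≤ f (ι u)
    have hlow : dH u v ≤ f (ι u) := by
      obtain ⟨b, hb⟩ := hnbru
      have hne : {c | ∃ (a b : V) (h : H.Adj a b) (t : ℕ),
          t ≤ w a b ∧ ι u = P a b h t ∧ c = (w a b - t) + dH b v}.Nonempty :=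
        ⟨(w b u - w b u) + dH u v, b, u, hb.symm, w b u, le_rfl, (hPw b u hb.symm).symm, rfl⟩
      refine le_csInf hne ?_
      rintro c ⟨a', b', h', t', ht', hu', rfl⟩
      rcases hrepV u a' b' h' t' ht' hu' with ⟨ht0', hua⟩ | ⟨htw', hub⟩
      · subst hua
        have h1 := htri u b' v h'
        omega
      · subst hub
        omega
    obtain ⟨p0, hp0⟩ := hdH_ex u v
    obtain ⟨q0, hq0⟩ := hlift u v p0
    have hreach : G.Reachable (ι u) (ι v) := ⟨q0⟩
    obtain ⟨qm, hqm⟩ := hreach.exists_walk_length_eq_dist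
    apply le_antisymm
    · calc G.dist (ι u) (ι v) ≤ q0.length := SimpleGraph.dist_le q0
        _ = dH u v := by rw [hq0, hp0]
    · calc dH u v ≤ f (ι u) := hlow
        _ ≤ qm.length := hbound _ _ qm rfl
        _ = G.dist (ι u) (ι v) := hqm
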